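/- Let V, Ṽ ∈ ℝ^{n×d} be full-rank matrices with rows w^k and w̃^k, c* > 0, and F(λ) = ∑_k c*_k e^{⟨λ, w̃^k⟩} w^k. If σ(im(V)) = σ(im(Ṽ)) and the all-plus sign vector (+,…,+) belongs to σ(im(V)), then F is a real analytic isomorphism of ℝ^d onto C° = { ∑_k c'_k w^k : c' > 0 }, for every c* > 0. -/

import Mathlib

open Finset

/-- componentwise sign vector -/
noncomputable def sgn {n : ℕ} (x : Fin n → ℝ) : Fin n → ℝ := fun i => Real.sign (x i)

/-- set of sign vectors of a set -/
noncomputable def sgnSet {n : ℕ} (A : Set (Fin n → ℝ)) : Set (Fin n → ℝ) := sgn '' A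

/-- standard dot product -/
noncomputable def dotp {m : ℕ} (x y : Fin m → ℝ) : ℝ := ∑ i, x i * y i

/-- orthogonal complement of a set, as a set -/
noncomputable def perpSet {n : ℕ} (A : Set (Fin n → ℝ)) : Set (Fin n → ℝ) :=
  {y | ∀ x ∈ A, dotp x y = 0}

open Real Filter Topology

lemma sign_pos_iff {a : ℝ} : Real.sign a = 1 ↔ 0 < a := by
  constructor
  · intro h
    rcases lt_trichotomy a 0 with h'|h'|h'
    · rw [Real.sign_of_neg h'] at h; norm_num at h
    · rw [h', Real.sign_zero] at h; norm_num at h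
    · exact h'
  · exact Real.sign_of_pos

lemma sign_neg_iff {a : ℝ} : Real.sign a = -1 ↔ a < 0 := by
  constructor
  · intro h
    rcases lt_trichotomy a 0 with h'|h'|h'
    · exact h'
    · rw [h', Real.sign_zero] at h; norm_num at h
    · rw [Real.sign_of_pos h'] at h; norm_num at h
  · exact Real.sign_of_neg

lemma sign_mul_nonneg {a b : ℝ} (h : Real.sign a = Real.sign b) : 0 ≤ a * b := by
  rcases lt_trichotomy a 0 with h'|h'|h'
  · rw [Real.sign_of_neg h'] at h
    exact le_of_lt (mul_pos_of_neg_of_neg h' (sign_neg_iff.mp h.symm))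
  · simp [h']
  · rw [Real.sign_of_pos h'] at h
    exact le_of_lt (mul_pos h' (sign_pos_iff.mp h.symm))

lemma sign_mul_pos_left {c a : ℝ} (hcpos : 0 < c) : Real.sign (c * a) = Real.sign a := by
  rcases lt_trichotomy a 0 with h'|h'|h'
  · rw [Real.sign_of_neg h', Real.sign_of_neg (mul_neg_of_pos_of_neg hcpos h')]
  · simp [h']
  · rw [Real.sign_of_pos h', Real.sign_of_pos (mul_pos hcpos h')]

lemma sign_exp_sub {a b : ℝ} : Real.sign (Real.exp a - Real.exp b) = Real.sign (a - b) := by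
  rcases lt_trichotomy a b with h'|h'|h'
  · rw [Real.sign_of_neg (sub_neg.mpr (Real.exp_lt_exp.mpr h')),
      Real.sign_of_neg (sub_neg.mpr h')]
  · simp [h']
  · rw [Real.sign_of_pos (sub_pos.mpr (Real.exp_lt_exp.mpr h')),
      Real.sign_of_pos (sub_pos.mpr h')]


lemma mulVecLin_injective {n d : ℕ} (A : Matrix (Fin n) (Fin d) ℝ) (hA : A.rank = d) :
    Function.Injective A.mulVecLin := by
  rw [← LinearMap.ker_eq_bot]
  have h1 : Module.finrank ℝ (LinearMap.range A.mulVecLin) = d := hA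
  have h2 := LinearMap.finrank_range_add_finrank_ker A.mulVecLin
  rw [h1] at h2
  simp only [Module.finrank_pi, Fintype.card_fin] at h2
  have h3 : Module.finrank ℝ (LinearMap.ker A.mulVecLin) = 0 := by omega
  exact Submodule.finrank_eq_zero.mp h3

/-- key sign lemma -/
lemma key_sign {n d : ℕ} (V : Matrix (Fin n) (Fin d) ℝ) (u : Fin n → ℝ)
    (hperp : ∀ j, ∑ k, u k * V k j = 0)
    (hmem : sgn u ∈ sgnSet ((LinearMap.range V.mulVecLin : Submodule ℝ (Fin n → ℝ)) : Set (Fin n → ℝ))) :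
    u = 0 := by
  obtain ⟨z, hz, hzu⟩ := hmem
  obtain ⟨x, hx⟩ := hz
  have hdot : ∑ k, u k * z k = 0 := by
    have : ∀ k, z k = ∑ j, V k j * x j := by
      intro k; rw [← hx]; rfl
    calc ∑ k, u k * z k = ∑ k, ∑ j, u k * (V k j * x j) := by
          simp_rw [← Finset.mul_sum]; exact Finset.sum_congr rfl fun k _ => by rw [this k]
      _ = ∑ j, (∑ k, u k * V k j) * x j := by
          rw [Finset.sum_comm]
          exact Finset.sum_congr rfl fun j _ => by rw [Finset.sum_mul]; exact Finset.sum_congr rfl fun _ _ => by ring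
      _ = 0 := by simp [hperp]
  have hsg : ∀ k, Real.sign (u k) = Real.sign (z k) := fun k => congrFun hzu.symm k
  have hnn : ∀ k ∈ Finset.univ, 0 ≤ u k * z k := fun k _ => sign_mul_nonneg (hsg k)
  have hzero := (Finset.sum_eq_zero_iff_of_nonneg hnn).mp hdot
  funext k
  by_contra hk
  have h1 : Real.sign (u k) ≠ 0 := fun h => hk (Real.sign_eq_zero_iff.mp h)
  have h2 : z k ≠ 0 := fun h => h1 (by rw [hsg k, h, Real.sign_zero])
  exact (mul_ne_zero hk h2) (hzero k (Finset.mem_univ k))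


lemma analytic_part {n d : ℕ} (V Vt : Matrix (Fin n) (Fin d) ℝ) (cstar : Fin n → ℝ) :
    AnalyticOn ℝ (fun lam : Fin d → ℝ =>
        ∑ k, (cstar k * Real.exp (dotp lam (Vt k))) • V k) Set.univ := by
  apply Finset.analyticOn_fun_sum
  intro k _
  apply AnalyticOn.smul _ analyticOn_const
  apply AnalyticOn.mul analyticOn_const
  apply AnalyticOn.rexp
  apply Finset.analyticOn_fun_sum
  intro i _
  exact ((ContinuousLinearMap.proj i : (Fin d → ℝ) →L[ℝ] ℝ).analyticOn _).mul analyticOn_const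

lemma T_apply {n d : ℕ} (V : Matrix (Fin n) (Fin d) ℝ) (c : Fin n → ℝ) :
    V.transpose.mulVecLin c = ∑ k, c k • V k := by
  funext j
  simp [Matrix.mulVecLin_apply, Matrix.mulVec, dotProduct, Matrix.transpose_apply, Matrix.vecMul,
    Finset.sum_apply, mul_comm]

lemma dotp_eq {n d : ℕ} (Vt : Matrix (Fin n) (Fin d) ℝ) (lam : Fin d → ℝ) (k : Fin n) :
    dotp lam (Vt k) = Vt.mulVecLin lam k := by
  simp [dotp, Matrix.mulVecLin_apply, Matrix.mulVec, dotProduct, mul_comm]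


lemma inj_part {n d : ℕ} (V Vt : Matrix (Fin n) (Fin d) ℝ)
    (hVt : Vt.rank = d)
    (hsgn : sgnSet ((LinearMap.range V.mulVecLin : Submodule ℝ (Fin n → ℝ)) : Set (Fin n → ℝ)) =
            sgnSet ((LinearMap.range Vt.mulVecLin : Submodule ℝ (Fin n → ℝ)) : Set (Fin n → ℝ)))
    (cstar : Fin n → ℝ) (hc : ∀ i, 0 < cstar i) :
    Function.Injective (fun lam : Fin d → ℝ =>
        ∑ k, (cstar k * Real.exp (dotp lam (Vt k))) • V k) := by
  intro lam mu h
  simp only at h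
  set u : Fin n → ℝ := fun k =>
    cstar k * (Real.exp (dotp lam (Vt k)) - Real.exp (dotp mu (Vt k))) with hu
  have hperp : ∀ j, ∑ k, u k * V k j = 0 := by
    intro j
    have h1 := congrFun h j
    simp only [Finset.sum_apply, Pi.smul_apply, smul_eq_mul] at h1
    have : ∑ k, u k * V k j =
        (∑ k, cstar k * Real.exp (dotp lam (Vt k)) * V k j) -
        (∑ k, cstar k * Real.exp (dotp mu (Vt k)) * V k j) := by
      rw [← Finset.sum_sub_distrib]
      exact Finset.sum_congr rfl fun k _ => by rw [hu]; ring
    rw [this, h1, sub_self]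
  have hmem : sgn u ∈ sgnSet
      ((LinearMap.range Vt.mulVecLin : Submodule ℝ (Fin n → ℝ)) : Set (Fin n → ℝ)) := by
    refine ⟨Vt.mulVecLin (lam - mu), LinearMap.mem_range_self _ _, ?_⟩
    funext k
    show Real.sign (Vt.mulVecLin (lam - mu) k) = Real.sign (u k)
    rw [hu]
    rw [sign_mul_pos_left (hc k), sign_exp_sub, dotp_eq, dotp_eq, map_sub]
    rfl
  have hu0 : u = 0 := key_sign V u hperp (hsgn ▸ hmem)
  have heq : Vt.mulVecLin lam = Vt.mulVecLin mu := by
    funext k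
    have := congrFun hu0 k
    simp only [hu, Pi.zero_apply] at this
    rcases mul_eq_zero.mp this with h' | h'
    · exact absurd h' (ne_of_gt (hc k))
    · rw [← dotp_eq, ← dotp_eq]
      exact Real.exp_injective (by linarith [sub_eq_zero.mp h'])
  exact mulVecLin_injective Vt hVt heq


lemma open_part {n d : ℕ} (V Vt : Matrix (Fin n) (Fin d) ℝ)
    (hVt : Vt.rank = d)
    (hsgn : sgnSet ((LinearMap.range V.mulVecLin : Submodule ℝ (Fin n → ℝ)) : Set (Fin n → ℝ)) =
            sgnSet ((LinearMap.range Vt.mulVecLin : Submodule ℝ (Fin n → ℝ)) : Set (Fin n → ℝ)))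
    (cstar : Fin n → ℝ) (hc : ∀ i, 0 < cstar i) :
    IsOpen (Set.range (fun lam : Fin d → ℝ =>
        ∑ k, (cstar k * Real.exp (dotp lam (Vt k))) • V k)) := by
  set TC : (Fin n → ℝ) →L[ℝ] (Fin d → ℝ) := LinearMap.toContinuousLinearMap V.transpose.mulVecLin
    with hTC
  set VtlC : (Fin d → ℝ) →L[ℝ] (Fin n → ℝ) := LinearMap.toContinuousLinearMap Vt.mulVecLin
    with hVtlC
  set F : (Fin d → ℝ) → (Fin d → ℝ) := fun lam =>
      ∑ k, (cstar k * Real.exp (dotp lam (Vt k))) • V k with hF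
  have hFG : ∀ lam, F lam = TC (fun k => cstar k * Real.exp (VtlC lam k)) := by
    intro lam
    rw [hF]
    show _ = V.transpose.mulVecLin _
    rw [T_apply]
    exact Finset.sum_congr rfl fun k _ => by rw [dotp_eq]; rfl
  rw [isOpen_iff_mem_nhds]
  rintro x ⟨lam, rfl⟩
  -- construct the strict derivative at lam
  set ℓ : Fin n → (Fin d → ℝ) →L[ℝ] ℝ :=
    fun k => (ContinuousLinearMap.proj k).comp VtlC with hℓ
  set D : (Fin d → ℝ) →L[ℝ] (Fin n → ℝ) :=
    ContinuousLinearMap.pi (fun k => (cstar k * Real.exp (ℓ k lam)) • ℓ k) with hD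
  have hH : HasStrictFDerivAt (fun l => (fun k => cstar k * Real.exp (VtlC l k))) D lam := by
    apply hasStrictFDerivAt_pi''
    intro k
    have h1 : HasStrictFDerivAt (fun l => (ℓ k) l) (ℓ k) lam :=
      (ℓ k).hasStrictFDerivAt
    have h2 : HasStrictDerivAt Real.exp (Real.exp ((ℓ k) lam)) ((ℓ k) lam) :=
      Real.hasStrictDerivAt_exp _
    have h3 := h2.comp_hasStrictFDerivAt lam h1
    have h4 := h3.const_mul (cstar k)
    have heq : (ContinuousLinearMap.proj k).comp D = (cstar k * Real.exp (ℓ k lam)) • ℓ k := by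
      ext v; simp [hD]
    rw [heq]
    have : (cstar k) • (Real.exp ((ℓ k) lam) • ℓ k) = (cstar k * Real.exp (ℓ k lam)) • ℓ k := by
      rw [smul_smul]
    rw [← this]
    exact h4
  have hG : HasStrictFDerivAt F (TC.comp D) lam := by
    have := (TC.hasStrictFDerivAt (x := fun k => cstar k * Real.exp (VtlC lam k))).comp lam hH
    apply this.congr_of_eventuallyEq
    filter_upwards with l using (hFG l).symm
  -- injectivity of the derivative
  set L := TC.comp D with hL
  have hinj : Function.Injective L := by
    intro h1 h2 hh
    have h0 : L (h1 - h2) = 0 := by rw [map_sub, hh, sub_self]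
    set u : Fin n → ℝ := fun k => (cstar k * Real.exp (ℓ k lam)) * (Vt.mulVecLin (h1 - h2) k)
      with hu
    have hDu : D (h1 - h2) = u := by
      funext k
      simp only [hD, hu, ContinuousLinearMap.pi_apply, ContinuousLinearMap.smul_apply,
        smul_eq_mul]
      congr 1
    have hperp : ∀ j, ∑ k, u k * V k j = 0 := by
      intro j
      have : TC u = 0 := by rw [← hDu]; exact h0
      have h5 : V.transpose.mulVecLin u = 0 := this
      rw [T_apply] at h5
      have := congrFun h5 j
      simpa [Finset.sum_apply] using this
    have hmem : sgn u ∈ sgnSet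
        ((LinearMap.range Vt.mulVecLin : Submodule ℝ (Fin n → ℝ)) : Set (Fin n → ℝ)) := by
      refine ⟨Vt.mulVecLin (h1 - h2), LinearMap.mem_range_self _ _, ?_⟩
      funext k
      show Real.sign _ = Real.sign (u k)
      rw [hu]
      rw [sign_mul_pos_left (mul_pos (hc k) (Real.exp_pos _))]
    have hu0 : u = 0 := key_sign V u hperp (hsgn ▸ hmem)
    have hv0 : Vt.mulVecLin (h1 - h2) = 0 := by
      funext k
      have := congrFun hu0 k
      simp only [hu, Pi.zero_apply] at this
      rcases mul_eq_zero.mp this with h' | h'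
      · exact absurd h' (ne_of_gt (mul_pos (hc k) (Real.exp_pos _)))
      · exact h'
    have := mulVecLin_injective Vt hVt (a₁ := h1 - h2) (a₂ := 0) (by simpa using hv0)
    exact sub_eq_zero.mp this
  have hsurj : Function.Surjective L := by
    have : Function.Injective L.toLinearMap := hinj
    exact LinearMap.injective_iff_surjective.mp this
  let e : (Fin d → ℝ) ≃ₗ[ℝ] (Fin d → ℝ) := LinearEquiv.ofBijective L.toLinearMap ⟨hinj, hsurj⟩
  let eC : (Fin d → ℝ) ≃L[ℝ] (Fin d → ℝ) := e.toContinuousLinearEquiv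
  have hcoe : (eC : (Fin d → ℝ) →L[ℝ] (Fin d → ℝ)) = L := by ext v; rfl
  have hG' : HasStrictFDerivAt F (eC : (Fin d → ℝ) →L[ℝ] (Fin d → ℝ)) lam := by
    rw [hcoe]; exact hG
  have hmap := hG'.map_nhds_eq_of_equiv
  rw [← hmap, Filter.mem_map]
  exact Filter.univ_mem' (fun l => Set.mem_range_self l)


lemma dot_vanish {n d : ℕ} (V : Matrix (Fin n) (Fin d) ℝ) (u : Fin n → ℝ)
    (hperp : ∀ j, ∑ k, u k * V k j = 0) {w : Fin n → ℝ}
    (hw : w ∈ LinearMap.range V.mulVecLin) : ∑ k, u k * w k = 0 := by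
  obtain ⟨mu, hmu⟩ := hw
  have hwk : ∀ k, w k = ∑ j, V k j * mu j := by
    intro k; rw [← hmu]; rfl
  calc ∑ k, u k * w k = ∑ k, ∑ j, u k * (V k j * mu j) := by
        simp_rw [← Finset.mul_sum]; exact Finset.sum_congr rfl fun k _ => by rw [hwk k]
    _ = ∑ j, (∑ k, u k * V k j) * mu j := by
        rw [Finset.sum_comm]
        exact Finset.sum_congr rfl fun j _ => by rw [Finset.sum_mul]; exact Finset.sum_congr rfl fun _ _ => by ring
    _ = 0 := by simp [hperp]

set_option maxHeartbeats 1000000 in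
lemma closed_part {n d : ℕ} (V Vt : Matrix (Fin n) (Fin d) ℝ)
    (hVt : Vt.rank = d)
    (hsgn : sgnSet ((LinearMap.range V.mulVecLin : Submodule ℝ (Fin n → ℝ)) : Set (Fin n → ℝ)) =
            sgnSet ((LinearMap.range Vt.mulVecLin : Submodule ℝ (Fin n → ℝ)) : Set (Fin n → ℝ)))
    (hplus : (fun _ => (1 : ℝ)) ∈
      sgnSet ((LinearMap.range V.mulVecLin : Submodule ℝ (Fin n → ℝ)) : Set (Fin n → ℝ)))
    (cstar : Fin n → ℝ) (hc : ∀ i, 0 < cstar i)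
    (x : Fin d → ℝ) (c' : Fin n → ℝ) (hc' : ∀ i, 0 < c' i) (hx : x = ∑ k, c' k • V k)
    (hclos : x ∈ closure (Set.range (fun lam : Fin d → ℝ =>
        ∑ k, (cstar k * Real.exp (dotp lam (Vt k))) • V k))) :
    x ∈ Set.range (fun lam : Fin d → ℝ =>
        ∑ k, (cstar k * Real.exp (dotp lam (Vt k))) • V k) := by
  set F : (Fin d → ℝ) → (Fin d → ℝ) := fun lam =>
      ∑ k, (cstar k * Real.exp (dotp lam (Vt k))) • V k with hF
  -- continuity of the "transpose" map and of F
  have hTcont : Continuous (fun c : Fin n → ℝ => ∑ k, c k • V k) := by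
    have : (fun c : Fin n → ℝ => ∑ k, c k • V k) = fun c => V.transpose.mulVecLin c :=
      funext fun c => (T_apply V c).symm
    rw [this]
    exact LinearMap.continuous_of_finiteDimensional _
  have hdotcont : ∀ k, Continuous (fun lam : Fin d → ℝ => dotp lam (Vt k)) := by
    intro k
    apply continuous_finset_sum
    exact fun i _ => (continuous_apply i).mul continuous_const
  have hcoefcont : Continuous (fun lam : Fin d → ℝ => (fun k => cstar k * Real.exp (dotp lam (Vt k)))) := by
    apply continuous_pi
    intro k
    exact continuous_const.mul (Real.continuous_exp.comp (hdotcont k))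
  have hFcont : Continuous F := by
    have : F = (fun c : Fin n → ℝ => ∑ k, c k • V k) ∘
        (fun lam => (fun k => cstar k * Real.exp (dotp lam (Vt k)))) := rfl
    rw [this]
    exact hTcont.comp hcoefcont
  -- get a sequence in the range converging to x
  obtain ⟨q, hqmem, hqx⟩ := mem_closure_iff_seq_limit.mp hclos
  choose lamseq hlam using hqmem
  set cseq : ℕ → (Fin n → ℝ) := fun j => (fun k => cstar k * Real.exp (dotp (lamseq j) (Vt k)))
    with hcseq
  have hFc : ∀ j, q j = ∑ k, cseq j k • V k := fun j => (hlam j).symm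
  -- the compact set K
  set K : Set (Fin d → ℝ) := insert x (Set.range q) with hK
  have hKcomp : IsCompact K := hqx.isCompact_insert_range
  -- positive vector z in the image of V
  obtain ⟨z, hzim, hzsgn⟩ := hplus
  have hzpos : ∀ k, 0 < z k := by
    intro k
    have := congrFun hzsgn k
    exact sign_pos_iff.mp this
  -- bound on K
  obtain ⟨r, hr⟩ := (hKcomp.isBounded).subset_closedBall 0
  obtain ⟨muz, hmuz⟩ := hzim
  -- the compact set S of nonnegative coefficient vectors mapping into K
  set S : Set (Fin n → ℝ) := {c | (∀ k, 0 ≤ c k) ∧ (∑ k, c k • V k) ∈ K} with hS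
  set Msum : ℝ := (d : ℝ) * r * ‖muz‖ + 1 with hMsum
  have hrnonneg : 0 ≤ r := by
    have := hr (Set.mem_insert x _)
    exact le_trans dist_nonneg (Metric.mem_closedBall.mp this)
  have hMsumpos : 0 < Msum := by
    have : 0 ≤ (d : ℝ) * r * ‖muz‖ := by positivity
    linarith
  have hSbound : ∀ c ∈ S, ∀ k, c k ≤ Msum / z k := by
    rintro c ⟨hcnn, hcK⟩ k
    have hzw : ∑ k', c k' * z k' = ∑ j, (∑ k', c k' * V k' j) * muz j := by
      have hzk : ∀ k', z k' = ∑ j, V k' j * muz j := by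
        intro k'; rw [← hmuz]; rfl
      calc ∑ k', c k' * z k' = ∑ k', ∑ j, c k' * (V k' j * muz j) := by
            simp_rw [← Finset.mul_sum]; exact Finset.sum_congr rfl fun k' _ => by rw [hzk k']
        _ = ∑ j, (∑ k', c k' * V k' j) * muz j := by
            rw [Finset.sum_comm]
            exact Finset.sum_congr rfl fun j _ => by rw [Finset.sum_mul]; exact Finset.sum_congr rfl fun _ _ => by ring
    have hyK : ‖∑ k', c k' • V k'‖ ≤ r := by
      have := hr hcK
      simpa [dist_eq_norm] using this
    have hsumle : ∑ k', c k' * z k' ≤ Msum := by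
      rw [hzw]
      have : ∀ j ∈ Finset.univ, (∑ k', c k' * V k' j) * muz j ≤ r * ‖muz‖ := by
        intro j _
        have h1 : |∑ k', c k' * V k' j| ≤ r := by
          have h2 : |(∑ k', c k' • V k') j| ≤ ‖∑ k', c k' • V k'‖ := by
            have := norm_le_pi_norm (∑ k', c k' • V k') j
            simpa using this
          have h3 : (∑ k', c k' • V k') j = ∑ k', c k' * V k' j := by
            simp [Finset.sum_apply]
          rw [h3] at h2
          exact le_trans h2 hyK
        have h4 : |muz j| ≤ ‖muz‖ := by
          have := norm_le_pi_norm muz j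
          simpa using this
        calc (∑ k', c k' * V k' j) * muz j ≤ |(∑ k', c k' * V k' j) * muz j| := le_abs_self _
          _ = |∑ k', c k' * V k' j| * |muz j| := abs_mul _ _
          _ ≤ r * ‖muz‖ := by
            apply mul_le_mul h1 h4 (abs_nonneg _) hrnonneg
      calc ∑ j, (∑ k', c k' * V k' j) * muz j ≤ ∑ _j : Fin d, r * ‖muz‖ :=
            Finset.sum_le_sum this
        _ = (d : ℝ) * r * ‖muz‖ := by simp [Finset.sum_const]; ring
        _ ≤ Msum := by rw [hMsum]; linarith
    have hterm : z k * c k ≤ ∑ k', c k' * z k' := by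
      have := Finset.single_le_sum (f := fun k' => c k' * z k')
        (fun k' _ => mul_nonneg (hcnn k') (le_of_lt (hzpos k'))) (Finset.mem_univ k)
      change c k * z k ≤ ∑ k', c k' * z k' at this
      linarith [this, mul_comm (z k) (c k)]
    rw [le_div_iff₀ (hzpos k)]
    calc c k * z k = z k * c k := mul_comm _ _
      _ ≤ ∑ k', c k' * z k' := hterm
      _ ≤ Msum := hsumle
  -- S is compact
  set R : ℝ := ∑ k, Msum / z k with hR
  have hRnonneg : 0 ≤ R := Finset.sum_nonneg fun k _ => le_of_lt (div_pos hMsumpos (hzpos k))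
  have hSR : ∀ c ∈ S, ∀ k, c k ≤ R := by
    intro c hcS k
    calc c k ≤ Msum / z k := hSbound c hcS k
      _ ≤ R := Finset.single_le_sum (f := fun k' => Msum / z k')
          (fun k' _ => le_of_lt (div_pos hMsumpos (hzpos k'))) (Finset.mem_univ k)
  have hSsub : S ⊆ Metric.closedBall 0 R := by
    intro c hcS
    rw [Metric.mem_closedBall, dist_zero_right]
    apply pi_norm_le_iff_of_nonneg hRnonneg |>.mpr
    intro k
    rw [Real.norm_eq_abs, abs_le]
    exact ⟨by linarith [hcS.1 k], hSR c hcS k⟩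
  have hSclosed : IsClosed S := by
    have h1 : IsClosed {c : Fin n → ℝ | ∀ k, 0 ≤ c k} := by
      have : {c : Fin n → ℝ | ∀ k, 0 ≤ c k} = ⋂ k, {c | 0 ≤ c k} := by
        ext c; simp
      rw [this]
      exact isClosed_iInter fun k => isClosed_le continuous_const (continuous_apply k)
    have h2 : IsClosed ((fun c : Fin n → ℝ => ∑ k, c k • V k) ⁻¹' K) :=
      (hKcomp.isClosed).preimage hTcont
    exact h1.inter h2
  have hScomp : IsCompact S :=
    (isCompact_closedBall 0 R).of_isClosed_subset hSclosed hSsub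
  -- the sequence cseq lives in S
  have hcseqS : ∀ j, cseq j ∈ S := by
    intro j
    constructor
    · exact fun k => le_of_lt (mul_pos (hc k) (Real.exp_pos _))
    · rw [← hFc j]
      exact Set.mem_insert_of_mem _ (Set.mem_range_self j)
  obtain ⟨cinf, hcinfS, φ, hφ, hφtend⟩ := hScomp.tendsto_subseq hcseqS
  have hTcinf : ∑ k, cinf k • V k = x := by
    have h1 : Tendsto (fun j => ∑ k, cseq (φ j) k • V k) atTop (𝓝 (∑ k, cinf k • V k)) :=
      (hTcont.tendsto cinf).comp hφtend
    have h2 : Tendsto (fun j => ∑ k, cseq (φ j) k • V k) atTop (𝓝 x) := by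
      have : (fun j => ∑ k, cseq (φ j) k • V k) = fun j => q (φ j) :=
        funext fun j => (hFc (φ j)).symm
      rw [this]
      exact hqx.comp hφ.tendsto_atTop
    exact tendsto_nhds_unique h1 h2
  -- the exponent sequence
  set yseq : ℕ → (Fin n → ℝ) := fun j => Vt.mulVecLin (lamseq (φ j)) with hyseq
  have hylog : ∀ j k, yseq j k = Real.log (cseq (φ j) k / cstar k) := by
    intro j k
    rw [hcseq]
    simp only
    rw [mul_div_cancel_left₀ _ (ne_of_gt (hc k)), Real.log_exp, dotp_eq]
  by_cases hpos : ∀ k, 0 < cinf k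
  -- Case 1 : all limit coefficients positive
  · have hytend : Tendsto yseq atTop (𝓝 (fun k => Real.log (cinf k / cstar k))) := by
      rw [tendsto_pi_nhds]
      intro k
      have h1 : Tendsto (fun j => cseq (φ j) k) atTop (𝓝 (cinf k)) :=
        ((continuous_apply k).tendsto cinf).comp hφtend
      have h2 : Tendsto (fun j => cseq (φ j) k / cstar k) atTop (𝓝 (cinf k / cstar k)) :=
        h1.div_const _
      have h3 : ContinuousAt Real.log (cinf k / cstar k) :=
        Real.continuousAt_log (ne_of_gt (div_pos (hpos k) (hc k)))
      have := h3.tendsto.comp h2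
      apply this.congr
      intro j
      exact (hylog j k).symm
    -- recover lamseq from yseq via a left inverse
    have hker : LinearMap.ker Vt.mulVecLin = ⊥ :=
      LinearMap.ker_eq_bot.mpr (mulVecLin_injective Vt hVt)
    obtain ⟨g, hg⟩ := Vt.mulVecLin.exists_leftInverse_of_injective hker
    have hglam : ∀ j, g (yseq j) = lamseq (φ j) := by
      intro j
      rw [hyseq]
      exact congrFun (congrArg DFunLike.coe hg) (lamseq (φ j))
    have hgcont : Continuous g := LinearMap.continuous_of_finiteDimensional _
    have hlamtend : Tendsto (fun j => lamseq (φ j)) atTop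
        (𝓝 (g (fun k => Real.log (cinf k / cstar k)))) := by
      have := (hgcont.tendsto _).comp hytend
      apply this.congr
      intro j
      exact hglam j
    refine ⟨g (fun k => Real.log (cinf k / cstar k)), ?_⟩
    have h1 : Tendsto (fun j => F (lamseq (φ j))) atTop
        (𝓝 (F (g (fun k => Real.log (cinf k / cstar k))))) :=
      (hFcont.tendsto _).comp hlamtend
    have h2 : Tendsto (fun j => F (lamseq (φ j))) atTop (𝓝 x) := by
      have : (fun j => F (lamseq (φ j))) = fun j => q (φ j) := funext fun j => hlam (φ j)
      rw [this]
      exact hqx.comp hφ.tendsto_atTop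
    exact tendsto_nhds_unique h1 h2
  -- Case 2 : some limit coefficient is zero; derive a contradiction
  · exfalso
    push_neg at hpos
    obtain ⟨k0, hk0⟩ := hpos
    have hcinf0 : cinf k0 = 0 := le_antisymm hk0 (hcinfS.1 k0)
    -- yseq k0 → -∞
    have hck0 : Tendsto (fun j => cseq (φ j) k0 / cstar k0) atTop (𝓝[>] 0) := by
      rw [tendsto_nhdsWithin_iff]
      constructor
      · have h1 : Tendsto (fun j => cseq (φ j) k0) atTop (𝓝 (cinf k0)) :=
          ((continuous_apply k0).tendsto cinf).comp hφtend
        rw [hcinf0] at h1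
        simpa using h1.div_const (cstar k0)
      · filter_upwards with j
        exact Set.mem_Ioi.mpr (div_pos (mul_pos (hc k0) (Real.exp_pos _)) (hc k0))
    have hybot : Tendsto (fun j => yseq j k0) atTop atBot := by
      have := Real.tendsto_log_nhdsGT_zero.comp hck0
      apply this.congr
      intro j
      exact (hylog j k0).symm
    -- the normalizing sequence
    set Mseq : ℕ → ℝ := fun j => max 1 ‖yseq j‖ with hMseq
    have hMpos : ∀ j, 0 < Mseq j := fun j => lt_of_lt_of_le zero_lt_one (le_max_left _ _)
    have hnormtop : Tendsto (fun j => ‖yseq j‖) atTop atTop := by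
      apply tendsto_atTop_mono (fun j => norm_le_pi_norm (yseq j) k0)
      have habs : Tendsto (fun j => |yseq j k0|) atTop atTop :=
        tendsto_abs_atBot_atTop.comp hybot
      apply habs.congr
      intro j
      rw [Real.norm_eq_abs]
    have hMtop : Tendsto Mseq atTop atTop :=
      tendsto_atTop_mono (fun j => le_max_right 1 ‖yseq j‖) hnormtop
    set zseq : ℕ → (Fin n → ℝ) := fun j => (Mseq j)⁻¹ • yseq j with hzseq
    -- zseq lives in a compact set
    set C : Set (Fin n → ℝ) := Metric.closedBall 0 1 ∩
      ((LinearMap.range Vt.mulVecLin : Submodule ℝ (Fin n → ℝ)) : Set (Fin n → ℝ)) with hC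
    have hCcomp : IsCompact C := by
      apply (isCompact_closedBall 0 1).inter_right
      exact Submodule.closed_of_finiteDimensional _
    have hzC : ∀ j, zseq j ∈ C := by
      intro j
      constructor
      · rw [Metric.mem_closedBall, dist_zero_right, hzseq]
        simp only [norm_smul, norm_inv, Real.norm_eq_abs, abs_of_pos (hMpos j)]
        rw [inv_mul_le_iff₀ (hMpos j), mul_one]
        exact le_max_right _ _
      · exact SetLike.mem_coe.mpr (Submodule.smul_mem _ _ (LinearMap.mem_range_self _ _))
    obtain ⟨zl, hzlC, ψ, hψ, hztend⟩ := hCcomp.tendsto_subseq hzC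
    -- ‖zl‖ = 1
    have hzlnorm : ‖zl‖ = 1 := by
      have h1 : Tendsto (fun j => ‖zseq (ψ j)‖) atTop (𝓝 ‖zl‖) :=
        (continuous_norm.tendsto zl).comp hztend
      have h2 : ∀ᶠ j in atTop, ‖zseq (ψ j)‖ = 1 := by
        have h3 : ∀ᶠ j in atTop, 1 ≤ ‖yseq (ψ j)‖ :=
          (hnormtop.comp hψ.tendsto_atTop).eventually_ge_atTop 1
        filter_upwards [h3] with j hj
        rw [hzseq]
        simp only [norm_smul, norm_inv, Real.norm_eq_abs, abs_of_pos (hMpos (ψ j))]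
        rw [hMseq]
        simp only
        rw [max_eq_right hj]
        rw [inv_mul_cancel₀ (by linarith)]
      have h4 : Tendsto (fun j => ‖zseq (ψ j)‖) atTop (𝓝 1) :=
        Tendsto.congr' (Filter.EventuallyEq.symm h2) tendsto_const_nhds
      exact tendsto_nhds_unique h1 h4
    -- zl ≤ 0 componentwise
    have hztendpt : ∀ k, Tendsto (fun j => zseq (ψ j) k) atTop (𝓝 (zl k)) := by
      intro k
      have := tendsto_pi_nhds.mp hztend k
      exact this
    have hyub : ∀ j k, yseq j k ≤ Real.log ((R + 1) / cstar k) := by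
      intro j k
      rw [hylog j k]
      have h6 : cseq (φ j) k ≤ R + 1 := by linarith [hSR _ (hcseqS (φ j)) k]
      have h5 : cseq (φ j) k / cstar k ≤ (R + 1) / cstar k :=
        (div_le_div_iff_of_pos_right (hc k)).mpr h6
      exact Real.log_le_log (div_pos (mul_pos (hc k) (Real.exp_pos _)) (hc k)) h5
    have hztendpt' : ∀ k, Tendsto (fun j => zseq (ψ j) k) atTop (𝓝 (zl k)) := hztendpt
    have hzseqval : ∀ j k, zseq j k = yseq j k / Mseq j := by
      intro j k
      rw [hzseq]
      simp only [Pi.smul_apply, smul_eq_mul]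
      rw [inv_mul_eq_div]
    have hzle : ∀ k, zl k ≤ 0 := by
      intro k
      have hBseq : ∀ j, zseq (ψ j) k ≤ Real.log ((R + 1) / cstar k) / Mseq (ψ j) := by
        intro j
        rw [hzseqval]
        exact (div_le_div_iff_of_pos_right (hMpos (ψ j))).mpr (hyub (ψ j) k)
      have hBtend : Tendsto (fun j => Real.log ((R + 1) / cstar k) / Mseq (ψ j)) atTop (𝓝 0) :=
        tendsto_const_nhds.div_atTop (hMtop.comp hψ.tendsto_atTop)
      exact le_of_tendsto_of_tendsto' (hztendpt k) hBtend hBseq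
    have hzzero : ∀ k, 0 < cinf k → zl k = 0 := by
      intro k hk
      have h1 : Tendsto (fun j => cseq (φ j) k) atTop (𝓝 (cinf k)) :=
        ((continuous_apply k).tendsto cinf).comp hφtend
      have h2 : Tendsto (fun j => cseq (φ j) k / cstar k) atTop (𝓝 (cinf k / cstar k)) :=
        h1.div_const _
      have h3 : ContinuousAt Real.log (cinf k / cstar k) :=
        Real.continuousAt_log (ne_of_gt (div_pos hk (hc k)))
      have hyk : Tendsto (fun j => yseq j k) atTop (𝓝 (Real.log (cinf k / cstar k))) := by
        have := h3.tendsto.comp h2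
        apply this.congr
        intro j
        exact (hylog j k).symm
      have h4 : Tendsto (fun j => zseq (ψ j) k) atTop (𝓝 0) := by
        have h5 := (hyk.comp hψ.tendsto_atTop).div_atTop (hMtop.comp hψ.tendsto_atTop)
        apply h5.congr
        intro j
        exact (hzseqval (ψ j) k).symm
      exact tendsto_nhds_unique (hztendpt k) h4
    -- get w in the image of V with the same sign pattern as zl
    have hzlsgn : sgn zl ∈ sgnSet
        ((LinearMap.range Vt.mulVecLin : Submodule ℝ (Fin n → ℝ)) : Set (Fin n → ℝ)) :=
      ⟨zl, hzlC.2, rfl⟩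
    rw [← hsgn] at hzlsgn
    obtain ⟨w, hwim, hwsgn⟩ := hzlsgn
    have hwsgn' : ∀ k, Real.sign (w k) = Real.sign (zl k) := fun k => congrFun hwsgn k
    -- orthogonality
    have hperp : ∀ j, ∑ k, (cinf k - c' k) * V k j = 0 := by
      intro j
      have h0 : (∑ k, cinf k • V k) - (∑ k, c' k • V k) = 0 := by
        rw [hTcinf, ← hx, sub_self]
      have h1 := congrFun h0 j
      simp only [Pi.sub_apply, Finset.sum_apply, Pi.smul_apply, smul_eq_mul,
        Pi.zero_apply] at h1
      rw [← Finset.sum_sub_distrib] at h1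
      rw [← h1]
      exact Finset.sum_congr rfl fun k _ => by ring
    have hdot0 : ∑ k, (cinf k - c' k) * w k = 0 :=
      dot_vanish V _ hperp (SetLike.mem_coe.mp hwim)
    have hterms : ∀ k ∈ Finset.univ, 0 ≤ (cinf k - c' k) * w k := by
      intro k _
      rcases lt_or_eq_of_le (hzle k) with h' | h'
      · have hwneg : w k < 0 := sign_neg_iff.mp (by rw [hwsgn' k]; exact Real.sign_of_neg h')
        have hcinfk : cinf k = 0 := by
          by_contra hne
          have : 0 < cinf k := lt_of_le_of_ne (hcinfS.1 k) (Ne.symm hne)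
          exact absurd (hzzero k this) (ne_of_lt h')
        rw [hcinfk]
        have : 0 - c' k < 0 := by linarith [hc' k]
        exact le_of_lt (mul_pos_of_neg_of_neg this hwneg)
      · have hwzero : w k = 0 := by
          have := hwsgn' k
          rw [h', Real.sign_zero] at this
          exact Real.sign_eq_zero_iff.mp this
        rw [hwzero, mul_zero]
    have hexists : ∃ k ∈ Finset.univ, 0 < (cinf k - c' k) * w k := by
      have hzlne : zl ≠ 0 := by
        intro h
        rw [h, norm_zero] at hzlnorm
        norm_num at hzlnorm
      obtain ⟨k1, hk1⟩ := Function.ne_iff.mp hzlne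
      have hzk1 : zl k1 < 0 := lt_of_le_of_ne (hzle k1) hk1
      refine ⟨k1, Finset.mem_univ k1, ?_⟩
      have hwneg : w k1 < 0 := sign_neg_iff.mp (by rw [hwsgn' k1]; exact Real.sign_of_neg hzk1)
      have hcinfk : cinf k1 = 0 := by
        by_contra hne
        have : 0 < cinf k1 := lt_of_le_of_ne (hcinfS.1 k1) (Ne.symm hne)
        exact absurd (hzzero k1 this) (ne_of_lt hzk1)
      rw [hcinfk]
      have : 0 - c' k1 < 0 := by linarith [hc' k1]
      exact mul_pos_of_neg_of_neg this hwneg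
    have := Finset.sum_pos' hterms hexists
    rw [hdot0] at this
    exact lt_irrefl 0 this


lemma range_part {n d : ℕ} (V Vt : Matrix (Fin n) (Fin d) ℝ)
    (hV : V.rank = d) (hVt : Vt.rank = d)
    (hsgn : sgnSet ((LinearMap.range V.mulVecLin : Submodule ℝ (Fin n → ℝ)) : Set (Fin n → ℝ)) =
            sgnSet ((LinearMap.range Vt.mulVecLin : Submodule ℝ (Fin n → ℝ)) : Set (Fin n → ℝ)))
    (hplus : (fun _ => (1 : ℝ)) ∈
      sgnSet ((LinearMap.range V.mulVecLin : Submodule ℝ (Fin n → ℝ)) : Set (Fin n → ℝ)))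
    (cstar : Fin n → ℝ) (hc : ∀ i, 0 < cstar i) :
    Set.range (fun lam : Fin d → ℝ =>
        ∑ k, (cstar k * Real.exp (dotp lam (Vt k))) • V k) =
      {x : Fin d → ℝ | ∃ c' : Fin n → ℝ, (∀ i, 0 < c' i) ∧ x = ∑ k, c' k • V k} := by
  set F : (Fin d → ℝ) → (Fin d → ℝ) := fun lam =>
      ∑ k, (cstar k * Real.exp (dotp lam (Vt k))) • V k with hF
  set s : Set (Fin d → ℝ) :=
    {x : Fin d → ℝ | ∃ c' : Fin n → ℝ, (∀ i, 0 < c' i) ∧ x = ∑ k, c' k • V k} with hs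
  have hsub : Set.range F ⊆ s := by
    rintro x ⟨lam, rfl⟩
    exact ⟨fun k => cstar k * Real.exp (dotp lam (Vt k)),
      fun k => mul_pos (hc k) (Real.exp_pos _), rfl⟩
  have hTC : Continuous (fun c : Fin n → ℝ => ∑ k, c k • V k) := by
    have : (fun c : Fin n → ℝ => ∑ k, c k • V k) = fun c => V.transpose.mulVecLin c :=
      funext fun c => (T_apply V c).symm
    rw [this]
    exact LinearMap.continuous_of_finiteDimensional _
  -- s is open
  have hsopen : IsOpen s := by
    set TC : (Fin n → ℝ) →L[ℝ] (Fin d → ℝ) := LinearMap.toContinuousLinearMap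
      V.transpose.mulVecLin with hTCdef
    have hseq : s = TC '' {c : Fin n → ℝ | ∀ k, 0 < c k} := by
      ext x
      constructor
      · rintro ⟨c', hc', rfl⟩
        refine ⟨c', hc', ?_⟩
        show V.transpose.mulVecLin c' = _
        exact T_apply V c'
      · rintro ⟨c', hc', rfl⟩
        refine ⟨c', hc', ?_⟩
        show (V.transpose.mulVecLin c' : Fin d → ℝ) = _
        exact T_apply V c'
        
    rw [hseq]
    have hsurj : Function.Surjective TC := by
      have h1 : Matrix.rank V.transpose = d := by rw [Matrix.rank_transpose]; exact hV
      have h2 : LinearMap.range V.transpose.mulVecLin = ⊤ := by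
        apply Submodule.eq_top_of_finrank_eq
        rw [Module.finrank_pi, Fintype.card_fin]
        exact h1
      have := LinearMap.range_eq_top.mp h2
      exact this
    apply TC.isOpenMap hsurj
    have : {c : Fin n → ℝ | ∀ k, 0 < c k} = ⋂ k, {c | 0 < c k} := by ext c; simp
    rw [this]
    exact isOpen_iInter_of_finite fun k =>
      isOpen_lt continuous_const (continuous_apply k)
  -- s is convex
  have hsconv : Convex ℝ s := by
    rintro x ⟨c1, hc1, rfl⟩ y ⟨c2, hc2, rfl⟩ a b ha hb hab
    refine ⟨fun k => a * c1 k + b * c2 k, ?_, ?_⟩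
    · intro k
      show (0:ℝ) < a * c1 k + b * c2 k
      rcases eq_or_lt_of_le ha with h | h
      · have hb1 : b = 1 := by linarith
        rw [← h, hb1]
        simpa using hc2 k
      · have h1 : 0 < a * c1 k := mul_pos h (hc1 k)
        have h2 : 0 ≤ b * c2 k := mul_nonneg hb (le_of_lt (hc2 k))
        linarith
    · show _ = ∑ k, (a * c1 k + b * c2 k) • V k
      rw [Finset.smul_sum, Finset.smul_sum, ← Finset.sum_add_distrib]
      exact Finset.sum_congr rfl fun k _ => by rw [smul_smul, smul_smul, ← add_smul]
  -- combine via connectedness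
  apply Set.eq_of_subset_of_subset hsub
  set u : Set (Fin d → ℝ) := Set.range F with hu
  set v : Set (Fin d → ℝ) := s \ closure u with hv
  have huopen : IsOpen u := open_part V Vt hVt hsgn cstar hc
  have hvopen : IsOpen v := hsopen.sdiff isClosed_closure
  have hdisj : Disjoint u v := by
    rw [Set.disjoint_left]
    rintro x hxu ⟨_, hxnc⟩
    exact hxnc (subset_closure hxu)
  have hsuv : s ⊆ u ∪ v := by
    intro x hx
    by_cases hxc : x ∈ closure u
    · obtain ⟨c', hc', hxe⟩ := hx
      exact Or.inl (closed_part V Vt hVt hsgn hplus cstar hc x c' hc' hxe hxc)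
    · exact Or.inr ⟨hx, hxc⟩
  have hne : (s ∩ u).Nonempty := ⟨F 0, hsub (Set.mem_range_self 0), Set.mem_range_self 0⟩
  exact hsconv.isPreconnected.subset_left_of_subset_union huopen hvopen hdisj hsuv hne

theorem stmt12 {n d : ℕ} (V Vt : Matrix (Fin n) (Fin d) ℝ)
    (hV : V.rank = d) (hVt : Vt.rank = d)
    (hsgn : sgnSet ((LinearMap.range V.mulVecLin : Submodule ℝ (Fin n → ℝ)) : Set (Fin n → ℝ)) =
            sgnSet ((LinearMap.range Vt.mulVecLin : Submodule ℝ (Fin n → ℝ)) : Set (Fin n → ℝ)))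
    (hplus : (fun _ => (1 : ℝ)) ∈
      sgnSet ((LinearMap.range V.mulVecLin : Submodule ℝ (Fin n → ℝ)) : Set (Fin n → ℝ)))
    (cstar : Fin n → ℝ) (hc : ∀ i, 0 < cstar i) :
    Function.Injective (fun lam : Fin d → ℝ =>
        ∑ k, (cstar k * Real.exp (dotp lam (Vt k))) • V k) ∧
    Set.range (fun lam : Fin d → ℝ =>
        ∑ k, (cstar k * Real.exp (dotp lam (Vt k))) • V k) =
      {x : Fin d → ℝ | ∃ c' : Fin n → ℝ, (∀ i, 0 < c' i) ∧ x = ∑ k, c' k • V k} ∧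
    AnalyticOn ℝ (fun lam : Fin d → ℝ =>
        ∑ k, (cstar k * Real.exp (dotp lam (Vt k))) • V k) Set.univ := by
  exact ⟨inj_part V Vt hVt hsgn cstar hc,
    range_part V Vt hV hVt hsgn hplus cstar hc,
    analytic_part V Vt cstar⟩
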